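/- arXiv:2306.10648 — 7 statements merged into one kernel-verified Lean document; each statement's English description precedes it below -/
import Mathlib

section
/- The function H_pois(λ, ℓ) := E[min(Y, ℓ)] where Y ~ Poisson(λ) is concave in λ ∈ [0, ∞) for every fixed positive integer ℓ. Equivalently, its second derivative equals -e^{-λ} λ^{ℓ-1}/(ℓ-1)! which is negative for λ > 0. -/
open Real

/-- `Hpois ℓ λ = E[min(Y, ℓ)]` for `Y ~ Poisson(λ)`, written as
`ℓ - Σ_{j=0}^{ℓ-1} (λ^j/j!) e^{-λ} (ℓ - j)`. -/
noncomputable def Hpois (ℓ : ℕ) (lam : ℝ) : ℝ :=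
  (ℓ : ℝ) - ∑ j ∈ Finset.range ℓ, lam ^ j / (Nat.factorial j : ℝ) * Real.exp (-lam) * ((ℓ : ℝ) - (j : ℝ))

noncomputable def Tp (ℓ : ℕ) (x : ℝ) : ℝ :=
  (∑ j ∈ Finset.range ℓ, x ^ j / (Nat.factorial j : ℝ)) * Real.exp (-x)

lemma expneg_hasDerivAt (x : ℝ) :
    HasDerivAt (fun t : ℝ => Real.exp (-t)) (-Real.exp (-x)) x := by
  have h := (Real.hasDerivAt_exp (-x)).comp x (hasDerivAt_neg x)
  simp only [mul_neg, mul_one] at h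
  exact h

lemma Tp_hasDerivAt (ℓ : ℕ) (x : ℝ) :
    HasDerivAt (Tp (ℓ + 1)) (-(x ^ ℓ / (Nat.factorial ℓ : ℝ)) * Real.exp (-x)) x := by
  induction ℓ with
  | zero =>
      have h : Tp 1 = fun t : ℝ => Real.exp (-t) := by
        funext t; simp [Tp]
      rw [h]
      simpa using expneg_hasDerivAt x
  | succ n ih =>
      have heq : Tp (n + 2) = fun t : ℝ =>
          Tp (n + 1) t + t ^ (n + 1) / (Nat.factorial (n + 1) : ℝ) * Real.exp (-t) := by
        funext t; simp [Tp, Finset.sum_range_succ, add_mul]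
      rw [heq]
      have h1 : HasDerivAt (fun t : ℝ => t ^ (n + 1) / (Nat.factorial (n + 1) : ℝ) * Real.exp (-t))
          (((n + 1 : ℕ) : ℝ) * x ^ n / (Nat.factorial (n + 1) : ℝ) * Real.exp (-x)
            + x ^ (n + 1) / (Nat.factorial (n + 1) : ℝ) * (-Real.exp (-x))) x := by
        have := ((hasDerivAt_pow (n + 1) x).div_const
          ((Nat.factorial (n + 1) : ℝ))).mul (expneg_hasDerivAt x)
        refine this.congr_deriv ?_
        simp only [Nat.add_sub_cancel]
      have h2 := ih.add h1
      refine h2.congr_deriv ?_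
      have hfac : (Nat.factorial (n + 1) : ℝ) = ((n : ℝ) + 1) * (Nat.factorial n : ℝ) := by
        rw [Nat.factorial_succ]; push_cast; ring
      have hne : (Nat.factorial n : ℝ) ≠ 0 := Nat.cast_ne_zero.mpr (Nat.factorial_ne_zero n)
      have hne1 : (n : ℝ) + 1 ≠ 0 := by positivity
      rw [hfac]
      field_simp
      push_cast
      ring

lemma Hpois_succ (ℓ : ℕ) : Hpois (ℓ + 1) = fun x => Hpois ℓ x + 1 - Tp (ℓ + 1) x := by
  funext x
  simp only [Hpois, Tp, Finset.sum_mul]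
  have h : ∀ j ∈ Finset.range (ℓ + 1),
      x ^ j / (Nat.factorial j : ℝ) * Real.exp (-x) * (((ℓ : ℝ) + 1) - (j : ℝ))
        = x ^ j / (Nat.factorial j : ℝ) * Real.exp (-x) * ((ℓ : ℝ) - (j : ℝ))
          + x ^ j / (Nat.factorial j : ℝ) * Real.exp (-x) := by
    intro j _; ring
  push_cast
  rw [Finset.sum_congr rfl h, Finset.sum_add_distrib,
    Finset.sum_range_succ (fun j => x ^ j / (Nat.factorial j : ℝ) * Real.exp (-x) * ((ℓ : ℝ) - (j : ℝ)))]
  simp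
  ring

lemma Hpois_hasDerivAt (ℓ : ℕ) (x : ℝ) : HasDerivAt (Hpois ℓ) (Tp ℓ x) x := by
  induction ℓ with
  | zero =>
      have h : Hpois 0 = fun _ : ℝ => (0 : ℝ) := by funext t; simp [Hpois]
      rw [h]
      simpa [Tp] using hasDerivAt_const x (0 : ℝ)
  | succ n ih =>
      rw [Hpois_succ]
      have h2 := (ih.add_const 1).sub (Tp_hasDerivAt n x)
      refine h2.congr_deriv ?_
      simp [Tp, Finset.sum_range_succ, add_mul]

lemma deriv_Hpois (ℓ : ℕ) : deriv (Hpois ℓ) = Tp ℓ :=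
  funext fun x => (Hpois_hasDerivAt ℓ x).deriv

/-- `H_pois(·, ℓ)` is concave on `[0, ∞)` for every positive integer `ℓ`; equivalently its
second derivative equals `-e^{-λ} λ^{ℓ-1}/(ℓ-1)!`, which is negative for `λ > 0`. -/
theorem hpois_concave (ℓ : ℕ) (hℓ : 1 ≤ ℓ) :
    ConcaveOn ℝ (Set.Ici (0 : ℝ)) (Hpois ℓ) ∧
    ∀ lam : ℝ, 0 < lam →
      deriv (deriv (Hpois ℓ)) lam = -Real.exp (-lam) * lam ^ (ℓ - 1) / (Nat.factorial (ℓ - 1) : ℝ) ∧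
      deriv (deriv (Hpois ℓ)) lam < 0 := by
  obtain ⟨m, rfl⟩ : ∃ m, ℓ = m + 1 := ⟨ℓ - 1, (Nat.succ_pred_eq_of_pos hℓ).symm⟩
  have hdiff : Differentiable ℝ (Hpois (m + 1)) :=
    fun x => (Hpois_hasDerivAt (m + 1) x).differentiableAt
  have hd : deriv (Hpois (m + 1)) = Tp (m + 1) := deriv_Hpois _
  have hd2 : ∀ x : ℝ, deriv (deriv (Hpois (m + 1))) x
      = -(x ^ m / (Nat.factorial m : ℝ)) * Real.exp (-x) := by
    intro x; rw [hd]; exact (Tp_hasDerivAt m x).deriv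
  have hdiff2 : Differentiable ℝ (deriv (Hpois (m + 1))) := by
    rw [hd]; exact fun x => (Tp_hasDerivAt m x).differentiableAt
  constructor
  · apply concaveOn_of_deriv2_nonpos (convex_Ici 0) hdiff.continuous.continuousOn
      hdiff.differentiableOn hdiff2.differentiableOn
    intro x hx
    rw [interior_Ici] at hx
    have hx' : (0 : ℝ) < x := hx
    have : deriv^[2] (Hpois (m + 1)) x = deriv (deriv (Hpois (m + 1))) x := by
      simp [Function.iterate_succ, Function.comp]
    rw [this, hd2]
    have h1 : 0 ≤ x ^ m / (Nat.factorial m : ℝ) * Real.exp (-x) := by positivity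
    nlinarith
  · intro lam hlam
    have heq : deriv (deriv (Hpois (m + 1))) lam
        = -Real.exp (-lam) * lam ^ (m + 1 - 1) / (Nat.factorial (m + 1 - 1) : ℝ) := by
      rw [hd2]; simp only [Nat.add_sub_cancel]; ring
    refine ⟨heq, ?_⟩
    rw [hd2]
    have h1 : 0 < lam ^ m / (Nat.factorial m : ℝ) * Real.exp (-lam) := by positivity
    nlinarith
end

section
/- Let z_1,...,z_n be independent Bernoulli random variables with parameters q_1,...,q_n and set λ = Σ q_i and Z = Σ z_i. Then for any positive integer ℓ, E[min(Z, ℓ)] ≥ λ(1 - λ/2). -/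
open Finset Real

/-- Probability of the outcome `z` of `n` independent Bernoulli random variables with
parameters `q i`. -/
noncomputable def berWeight {n : ℕ} (q : Fin n → ℝ) (z : Fin n → Bool) : ℝ :=
  ∏ i, if z i then q i else 1 - q i

/-- Number of successes in outcome `z`. -/
def count {n : ℕ} (z : Fin n → Bool) : ℕ := ∑ i, if z i then 1 else 0

/-- `Hber q ℓ = E[min(Σᵢ zᵢ, ℓ)]` for independent `zᵢ ~ Ber(q i)`. -/
noncomputable def Hber {n : ℕ} (q : Fin n → ℝ) (ℓ : ℕ) : ℝ :=
  ∑ z : Fin n → Bool, berWeight q z * min ((count z : ℝ)) (ℓ : ℝ)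

/-- `Ptail q m = P[Σᵢ zᵢ ≥ m]` for independent `zᵢ ~ Ber(q i)`. -/
noncomputable def Ptail {n : ℕ} (q : Fin n → ℝ) (m : ℕ) : ℝ :=
  ∑ z ∈ Finset.univ.filter (fun z : Fin n → Bool => m ≤ count z), berWeight q z

lemma prod_one_sub_le {n : ℕ} (q : Fin n → ℝ) (hq : ∀ i, q i ∈ Set.Icc (0 : ℝ) 1)
    (s : Finset (Fin n)) :
    ∏ i ∈ s, (1 - q i) ≤ 1 - (∑ i ∈ s, q i) + (∑ i ∈ s, q i) ^ 2 / 2 := by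
  induction s using Finset.induction with
  | empty => simp
  | @insert a s ha ih =>
    rw [Finset.prod_insert ha, Finset.sum_insert ha]
    have h1 : (0:ℝ) ≤ q a := (hq a).1
    have h2 : q a ≤ 1 := (hq a).2
    have hS : (0:ℝ) ≤ ∑ i ∈ s, q i := Finset.sum_nonneg fun i _ => (hq i).1
    have hP : ∏ i ∈ s, (1 - q i) ≤ 1 - (∑ i ∈ s, q i) + (∑ i ∈ s, q i) ^ 2 / 2 := ih
    nlinarith [mul_le_mul_of_nonneg_left hP (by linarith : (0:ℝ) ≤ 1 - q a)]

lemma sum_berWeight {n : ℕ} (q : Fin n → ℝ) :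
    ∑ z : Fin n → Bool, berWeight q z = 1 := by
  have h := Finset.prod_univ_sum (fun _ : Fin n => (Finset.univ : Finset Bool))
    (fun i b => if b then q i else 1 - q i)
  simp only [Fintype.piFinset_univ] at h
  rw [show (∑ z : Fin n → Bool, berWeight q z) = _ from rfl]
  unfold berWeight
  rw [← h]
  simp

lemma berWeight_nonneg {n : ℕ} (q : Fin n → ℝ) (hq : ∀ i, q i ∈ Set.Icc (0 : ℝ) 1)
    (z : Fin n → Bool) : 0 ≤ berWeight q z := by
  refine Finset.prod_nonneg fun i _ => ?_
  rcases hq i with ⟨h1, h2⟩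
  split <;> linarith

/-- For independent `z_i ~ Ber(q_i)` with `λ = Σ q_i` and any positive integer `ℓ`,
`E[min(Σ z_i, ℓ)] ≥ λ(1 - λ/2)`. -/
theorem hber_lower (n : ℕ) (q : Fin n → ℝ) (hq : ∀ i, q i ∈ Set.Icc (0 : ℝ) 1)
    (lam : ℝ) (hlam : lam = ∑ i, q i) (ℓ : ℕ) (hℓ : 1 ≤ ℓ) :
    lam * (1 - lam / 2) ≤ Hber q ℓ := by
  have hP1 : Ptail q 1 ≤ Hber q ℓ := by
    rw [Ptail, Finset.sum_filter, Hber]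
    refine Finset.sum_le_sum fun z _ => ?_
    by_cases h : 1 ≤ count z
    · rw [if_pos h]
      have hc1 : (1:ℝ) ≤ (count z : ℝ) := by exact_mod_cast h
      have hc2 : (1:ℝ) ≤ (ℓ : ℝ) := by exact_mod_cast hℓ
      have : (1:ℝ) ≤ min ((count z : ℝ)) (ℓ : ℝ) := le_min hc1 hc2
      nlinarith [berWeight_nonneg q hq z]
    · rw [if_neg h]
      have h0 : count z = 0 := Nat.eq_zero_of_not_pos h
      rw [h0]
      push_cast
      rw [min_eq_left (by positivity : (0:ℝ) ≤ (ℓ:ℝ))]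
      simp
  have hsplit : Ptail q 1 = 1 - ∏ i, (1 - q i) := by
    have hfil : (Finset.univ.filter (fun z : Fin n → Bool => ¬ 1 ≤ count z))
        = {fun _ => false} := by
      ext z
      simp only [Finset.mem_filter, Finset.mem_univ, true_and, Finset.mem_singleton, not_le,
        Nat.lt_one_iff]
      constructor
      · intro h
        funext i
        rw [count, Finset.sum_eq_zero_iff] at h
        have := h i (Finset.mem_univ i)
        simpa using this
      · intro h
        subst h
        simp [count]
    have := sum_berWeight q
    rw [← Finset.sum_filter_add_sum_filter_not Finset.univ
      (fun z : Fin n → Bool => 1 ≤ count z) (berWeight q)] at this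
    rw [hfil] at this
    have hw : berWeight q (fun _ => false) = ∏ i, (1 - q i) := by
      simp [berWeight]
    rw [Ptail]
    simp only [Finset.sum_singleton, hw] at this
    linarith
  have hprod := prod_one_sub_le q hq Finset.univ
  rw [← hlam] at hprod
  nlinarith [hP1, hsplit]
end

section
/- Let z_1,...,z_n be independent Bernoulli random variables with parameters q_1,...,q_n such that λ = Σ q_i ≥ 1. Then for any positive integer ℓ, E[min(Σ z_i, ℓ)] ≥ 1/2. -/
open Finset Real

/-- For independent `z_i ~ Ber(q_i)` with `Σ q_i ≥ 1` and any positive integer `ℓ`,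
`E[min(Σ z_i, ℓ)] ≥ 1/2`. -/
theorem hber_half (n : ℕ) (q : Fin n → ℝ) (hq : ∀ i, q i ∈ Set.Icc (0 : ℝ) 1)
    (hlam : 1 ≤ ∑ i, q i) (ℓ : ℕ) (hℓ : 1 ≤ ℓ) :
    (1 : ℝ) / 2 ≤ Hber q ℓ := by
  have hw : ∀ z : Fin n → Bool, 0 ≤ berWeight q z := fun z => by
    apply Finset.prod_nonneg
    intro i _
    obtain ⟨h0, h1⟩ := hq i
    split <;> linarith
  have hsum : ∑ z : Fin n → Bool, berWeight q z = 1 := by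
    unfold berWeight
    rw [← Fintype.piFinset_univ, ← Finset.prod_univ_sum (t := fun _ : Fin n => (Finset.univ : Finset Bool)) (f := fun i b => if b then q i else 1 - q i)]
    simp
  -- step 1: Hber q ℓ ≥ Hber q 1
  have step1 : Hber q 1 ≤ Hber q ℓ := by
    unfold Hber
    apply Finset.sum_le_sum
    intro z _
    apply mul_le_mul_of_nonneg_left _ (hw z)
    exact min_le_min le_rfl (by exact_mod_cast hℓ)
  -- compute Hber q 1
  have hcf : berWeight q (fun _ => false) = ∏ i, (1 - q i) := by
    unfold berWeight; simp
  have key : ∀ z : Fin n → Bool,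
      berWeight q z * min ((count z : ℝ)) ((1 : ℕ) : ℝ)
        = berWeight q z - (if z = (fun _ => false) then berWeight q z else 0) := by
    intro z
    by_cases h : z = (fun _ => false)
    · subst h
      have : count (fun _ : Fin n => false) = 0 := by simp [count]
      simp [this]
    · have hc : 1 ≤ count z := by
        rcases Function.ne_iff.mp h with ⟨i, hi⟩
        simp at hi
        have : (1 : ℕ) = if z i then 1 else 0 := by simp [hi]
        rw [count]
        calc (1 : ℕ) = if z i then 1 else 0 := this
          _ ≤ ∑ j, if z j then 1 else 0 :=
            Finset.single_le_sum (f := fun j => if z j then 1 else 0)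
              (fun j _ => Nat.zero_le _) (Finset.mem_univ i)
      have : min ((count z : ℝ)) ((1:ℕ) : ℝ) = 1 := by
        push_cast
        rw [min_eq_right] ; exact_mod_cast hc
      rw [this]
      simp [h]
  have hH1 : Hber q 1 = 1 - ∏ i, (1 - q i) := by
    unfold Hber
    rw [Finset.sum_congr rfl (fun z _ => key z), Finset.sum_sub_distrib, hsum,
      Finset.sum_ite_eq' Finset.univ (fun _ => false) (berWeight q), hcf]
    simp
  -- step 2: ∏ (1 - q i) ≤ 1/2
  have step2 : ∏ i, (1 - q i) ≤ 1 / 2 := by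
    have h1 : ∏ i, (1 - q i) ≤ ∏ i, Real.exp (-(q i)) := by
      apply Finset.prod_le_prod
      · intro i _; linarith [(hq i).2]
      · intro i _
        have := Real.add_one_le_exp (-(q i))
        linarith
    have h2 : ∏ i, Real.exp (-(q i)) = Real.exp (-(∑ i, q i)) := by
      rw [← Real.exp_sum]; simp
    have h3 : Real.exp (-(∑ i, q i)) ≤ Real.exp (-1) := by
      apply Real.exp_le_exp.mpr; linarith
    have h4 : Real.exp (-1) ≤ 1 / 2 := by
      rw [Real.exp_neg]
      rw [inv_le_comm₀ (Real.exp_pos 1) (by norm_num)]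
      have := Real.add_one_le_exp (1 : ℝ)
      linarith
    linarith
  calc (1 : ℝ) / 2 = 1 - 1 / 2 := by norm_num
    _ ≤ 1 - ∏ i, (1 - q i) := by linarith
    _ = Hber q 1 := hH1.symm
    _ ≤ Hber q ℓ := step1
end

section
/- For any real α ≥ 3.4, the series Σ_{i=1}^∞ exp(-i²/(2α + i)) is at most 0.85·α. -/
open Real

private lemma exp_neg_le_aux (q : ℝ) (hq : 0 ≤ q) :
    Real.exp (-q) ≤ ((1 + q / 64)⁻¹) ^ (64 : ℕ) := by
  have h64 : Real.exp (-q) = Real.exp (-(q/64)) ^ (64:ℕ) := by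
    rw [← Real.exp_nat_mul]; congr 1; ring
  rw [h64]
  apply pow_le_pow_left₀ (Real.exp_nonneg _)
  have h2 := Real.add_one_le_exp (q/64)
  have hpos : (0:ℝ) < 1 + q/64 := by positivity
  rw [Real.exp_neg]
  gcongr
  linarith

private lemma tsum_tail_eq (c : ℝ) :
    ∑' k : ℕ, Real.exp (-(((k:ℝ) + c) / 2)) = Real.exp (-(c/2)) * (1 - Real.exp (-(1/2)))⁻¹ := by
  have h : ∀ k : ℕ, Real.exp (-(((k:ℝ) + c) / 2)) = Real.exp (-(c/2)) * (Real.exp (-(1/2)))^k := by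
    intro k
    rw [← Real.exp_nat_mul, ← Real.exp_add]
    congr 1; ring
  simp only [h]
  rw [tsum_mul_left,
    tsum_geometric_of_lt_one (Real.exp_nonneg _) (Real.exp_lt_one_iff.mpr (by norm_num))]

private lemma summable_tail (c : ℝ) :
    Summable (fun k : ℕ => Real.exp (-(((k:ℝ) + c) / 2))) := by
  have h : ∀ k : ℕ, Real.exp (-(((k:ℝ) + c) / 2)) = Real.exp (-(c/2)) * (Real.exp (-(1/2)))^k := by
    intro k
    rw [← Real.exp_nat_mul, ← Real.exp_add]
    congr 1; ring
  exact Summable.congr ((summable_geometric_of_lt_one (Real.exp_nonneg _)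
    (Real.exp_lt_one_iff.mpr (by norm_num))).mul_left _) (fun k => (h k).symm)

private lemma exp_half_bound : Real.exp (-(1/2 : ℝ)) ≤ 0.608 := by
  refine le_trans (exp_neg_le_aux (1/2) (by norm_num)) ?_
  norm_num

private lemma one_sub_exp_half : (0:ℝ) < 1 - Real.exp (-(1/2)) := by
  have := Real.exp_lt_one_iff.mpr (show -(1/2:ℝ) < 0 by norm_num)
  linarith

private lemma tail_tsum_bound (c : ℝ) (hc : Real.exp (-(c/2)) ≤ 0.0085) :
    ∑' k : ℕ, Real.exp (-(((k:ℝ) + c) / 2)) ≤ 0.03 := by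
  rw [tsum_tail_eq c]
  have hpos := one_sub_exp_half
  have h1 : (1 - Real.exp (-(1/2)))⁻¹ ≤ (0.392)⁻¹ := by
    rw [inv_le_inv₀ hpos (by norm_num)]
    linarith [exp_half_bound]
  calc Real.exp (-(c/2)) * (1 - Real.exp (-(1/2)))⁻¹
      ≤ 0.0085 * (0.392)⁻¹ := by
        apply mul_le_mul hc h1 (inv_nonneg.mpr hpos.le) (by norm_num)
    _ ≤ 0.03 := by norm_num

private lemma summable_main (β : ℝ) (hβ : 0 < β) :
    Summable (fun i : ℕ => Real.exp (-((i : ℝ) + 1) ^ 2 / (2 * β + ((i : ℝ) + 1)))) := by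
  have hle : ∀ n : ℕ, Real.exp (-((n : ℝ) + 1) ^ 2 / (2 * β + ((n : ℝ) + 1)))
      ≤ Real.exp (2*β - 1) * (Real.exp (-1))^n := by
    intro n
    have hd : (0:ℝ) < 2*β + ((n:ℝ)+1) := by positivity
    have hexp : -((n:ℝ)+1)^2 / (2*β + ((n:ℝ)+1)) ≤ 2*β - 1 + (n:ℕ) * (-1) := by
      rw [div_le_iff₀ hd]
      push_cast
      nlinarith [sq_nonneg ((n:ℝ)+1), sq_nonneg β, (Nat.cast_nonneg n : (0:ℝ) ≤ (n:ℕ))]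
    calc Real.exp (-((n:ℝ)+1)^2 / (2*β + ((n:ℝ)+1)))
        ≤ Real.exp (2*β - 1 + (n:ℕ) * (-1)) := Real.exp_le_exp.mpr hexp
      _ = Real.exp (2*β - 1) * (Real.exp (-1))^n := by
          rw [Real.exp_add, Real.exp_nat_mul]
  exact Summable.of_nonneg_of_le (fun n => Real.exp_nonneg _) hle
    ((summable_geometric_of_lt_one (Real.exp_nonneg _)
      (Real.exp_lt_one_iff.mpr (by norm_num))).mul_left _)

private lemma summable_gauss (α : ℝ) (hα : 0 < α) :
    Summable (fun n : ℕ => Real.exp (-((n:ℝ)+1)^2 / (4*α))) := by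
  have hle : ∀ n : ℕ, Real.exp (-((n:ℝ)+1)^2 / (4*α)) ≤ (Real.exp (-(1/(4*α))))^n := by
    intro n
    rw [← Real.exp_nat_mul]
    apply Real.exp_le_exp.mpr
    have h1 : (n:ℝ) * -(1/(4*α)) = -(n:ℝ)/(4*α) := by ring
    rw [h1, div_le_div_iff₀ (by positivity) (by positivity)]
    have h2 : (n:ℝ) ≤ ((n:ℝ)+1)^2 := by nlinarith [(Nat.cast_nonneg n : (0:ℝ) ≤ (n:ℕ))]
    nlinarith [mul_le_mul_of_nonneg_right h2 (le_of_lt (by positivity : (0:ℝ) < 4*α))]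
  exact Summable.of_nonneg_of_le (fun n => Real.exp_nonneg _) hle
    (summable_geometric_of_lt_one (Real.exp_nonneg _)
      (Real.exp_lt_one_iff.mpr (by norm_num [hα] : -(1/(4*α)) < 0)))

set_option maxHeartbeats 1000000 in
private lemma gauss_sum_le (α : ℝ) (hα : 0 < α) :
    ∑' n : ℕ, Real.exp (-((n:ℝ)+1)^2 / (4*α)) ≤ Real.sqrt (π * α) := by
  have hb : 0 < 1/(4*α) := by positivity
  set g : ℝ → ℝ := fun x => Real.exp (-(1/(4*α)) * x^2) with hg
  have hgval : ∀ n : ℕ, Real.exp (-((n:ℝ)+1)^2 / (4*α)) = g ((n:ℝ)+1) := by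
    intro n; simp only [hg]; congr 1; field_simp
  have hint : ∫ x in Set.Ioi (0:ℝ), g x = Real.sqrt (π * α) := by
    rw [hg, integral_gaussian_Ioi]
    rw [show π / (1/(4*α)) = 4*(π*α) by field_simp]
    rw [show (4:ℝ)*(π*α) = 2^2*(π*α) by norm_num, Real.sqrt_mul (by positivity),
      Real.sqrt_sq (by norm_num)]
    ring
  apply Real.tsum_le_of_sum_range_le (fun n => Real.exp_nonneg _)
  intro N
  have anti : AntitoneOn g (Set.Icc (0:ℝ) (0 + N)) := by
    intro x hx y hy hxy
    simp only [hg]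
    apply Real.exp_le_exp.mpr
    have hsq : x^2 ≤ y^2 := by nlinarith [hx.1]
    nlinarith [mul_le_mul_of_nonneg_left hsq hb.le]
  have h1 := anti.sum_le_integral
  have h2 : ∫ x in (0:ℝ)..(0 + (N:ℝ)), g x ≤ ∫ x in Set.Ioi (0:ℝ), g x := by
    rw [intervalIntegral.integral_of_le (by positivity)]
    apply MeasureTheory.setIntegral_mono_set
      ((integrable_exp_neg_mul_sq hb).integrableOn)
      (Filter.Eventually.of_forall fun x => Real.exp_nonneg _)
      Set.Ioc_subset_Ioi_self.eventuallyLE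
  calc ∑ i ∈ Finset.range N, Real.exp (-((i:ℝ)+1)^2 / (4*α))
      = ∑ i ∈ Finset.range N, g ((0:ℝ) + ((i:ℕ)+1 : ℕ)) := by
        apply Finset.sum_congr rfl; intro i _; rw [hgval]; push_cast; ring_nf
    _ ≤ ∫ x in (0:ℝ)..(0 + (N:ℝ)), g x := by exact_mod_cast h1
    _ ≤ ∫ x in Set.Ioi (0:ℝ), g x := h2
    _ = Real.sqrt (π * α) := hint

set_option maxHeartbeats 1000000 in
private lemma low_bound :
    ∑' i : ℕ, Real.exp (-((i : ℝ) + 1) ^ 2 / (2 * (4.6:ℝ) + ((i : ℝ) + 1))) ≤ 2.8 := by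
  set F : ℕ → ℝ := fun i => Real.exp (-((i : ℝ) + 1) ^ 2 / (2 * (4.6:ℝ) + ((i : ℝ) + 1)))
    with hF
  have hs : Summable F := summable_main 4.6 (by norm_num)
  rw [← Summable.sum_add_tsum_nat_add 10 hs]
  have head : ∑ i ∈ Finset.range 10, F i ≤ 2.77 := by
    have hb : ∀ i : ℕ, F i
        ≤ ((1 + (((i:ℝ)+1)^2/(2*(4.6:ℝ)+((i:ℝ)+1)))/64)⁻¹)^(64:ℕ) := by
      intro i
      simp only [hF]
      rw [neg_div]
      exact exp_neg_le_aux _ (by positivity)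
    calc ∑ i ∈ Finset.range 10, F i
        ≤ ∑ i ∈ Finset.range 10,
            ((1 + (((i:ℝ)+1)^2/(2*(4.6:ℝ)+((i:ℝ)+1)))/64)⁻¹)^(64:ℕ) :=
          Finset.sum_le_sum (fun i _ => hb i)
      _ ≤ 2.77 := by norm_num [Finset.sum_range_succ]
  have tail : ∑' k : ℕ, F (k + 10) ≤ 0.03 := by
    have hbd : ∀ k : ℕ, F (k + 10) ≤ Real.exp (-(((k:ℝ) + 11) / 2)) := by
      intro k
      simp only [hF]
      apply Real.exp_le_exp.mpr
      have hk : (0:ℝ) ≤ (k:ℝ) := Nat.cast_nonneg k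
      push_cast
      rw [neg_div, neg_le_neg_iff, le_div_iff₀ (by linarith)]
      nlinarith
    refine le_trans (Summable.tsum_le_tsum hbd ((summable_nat_add_iff 10).mpr hs) (summable_tail 11)) ?_
    apply tail_tsum_bound
    refine le_trans (exp_neg_le_aux (11/2) (by norm_num)) ?_
    norm_num
  linarith

/-- For any real `α ≥ 3.4`, `Σ_{i=1}^∞ exp(-i²/(2α + i)) ≤ 0.85·α`. -/
theorem series_le (α : ℝ) (hα : (3.4 : ℝ) ≤ α) :
    ∑' i : ℕ, Real.exp (-((i : ℝ) + 1) ^ 2 / (2 * α + ((i : ℝ) + 1))) ≤ 0.85 * α := by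
  have hα0 : (0:ℝ) < α := by linarith
  set F : ℕ → ℝ := fun i => Real.exp (-((i : ℝ) + 1) ^ 2 / (2 * α + ((i : ℝ) + 1))) with hFd
  have hF : Summable F := summable_main α hα0
  rcases le_or_gt α 4.6 with hcase | hcase
  · -- low branch
    have hmono : ∀ i : ℕ, F i
        ≤ Real.exp (-((i : ℝ) + 1) ^ 2 / (2 * (4.6:ℝ) + ((i : ℝ) + 1))) := by
      intro i
      simp only [hFd]
      apply Real.exp_le_exp.mpr
      have h1 : (0:ℝ) < 2*α + ((i:ℝ)+1) := by positivity
      have h2 : (0:ℝ) < 2*(4.6:ℝ) + ((i:ℝ)+1) := by positivity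
      rw [div_le_div_iff₀ h1 h2]
      nlinarith [sq_nonneg ((i:ℝ)+1)]
    calc ∑' i, F i
        ≤ ∑' i : ℕ, Real.exp (-((i : ℝ) + 1) ^ 2 / (2 * (4.6:ℝ) + ((i : ℝ) + 1))) :=
          Summable.tsum_le_tsum hmono hF (summable_main 4.6 (by norm_num))
      _ ≤ 2.8 := low_bound
      _ ≤ 0.85 * α := by linarith
  · -- high branch
    set G : ℕ → ℝ := fun n => Real.exp (-((n:ℝ)+1)^2 / (4*α)) with hGd
    set T : ℕ → ℝ := fun k => Real.exp (-(((k:ℝ) + 10) / 2)) with hTd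
    have hG : Summable G := summable_gauss α hα0
    have hhead : ∀ i ∈ Finset.range 9, F i ≤ G i := by
      intro i hi
      simp only [Finset.mem_range] at hi
      simp only [hFd, hGd]
      apply Real.exp_le_exp.mpr
      have hle : (i:ℝ) + 1 ≤ 9 := by
        have : (i:ℝ) ≤ 8 := by exact_mod_cast Nat.lt_succ_iff.mp hi
        linarith
      have h1 : (0:ℝ) < 2*α + ((i:ℝ)+1) := by positivity
      rw [div_le_div_iff₀ h1 (by positivity)]
      nlinarith [sq_nonneg ((i:ℝ)+1)]
    have htail : ∀ k : ℕ, F (k + 9) ≤ G (k + 9) + T k := by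
      intro k
      have hk : (0:ℝ) ≤ (k:ℝ) := Nat.cast_nonneg k
      rcases le_or_gt ((k:ℝ) + 10) (2*α) with h | h
      · refine le_trans ?_ (le_add_of_nonneg_right (Real.exp_nonneg _))
        simp only [hFd, hGd]
        apply Real.exp_le_exp.mpr
        push_cast
        have h1 : (0:ℝ) < 2*α + ((k:ℝ)+9+1) := by positivity
        rw [div_le_div_iff₀ h1 (by positivity)]
        nlinarith [sq_nonneg ((k:ℝ)+10)]
      · refine le_trans ?_ (le_add_of_nonneg_left (Real.exp_nonneg _))
        simp only [hFd, hTd]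
        apply Real.exp_le_exp.mpr
        push_cast
        have h1 : (0:ℝ) < 2*α + ((k:ℝ)+9+1) := by positivity
        rw [neg_div, neg_le_neg_iff, le_div_iff₀ h1]
        nlinarith
    have hsplitF := (Summable.sum_add_tsum_nat_add 9 hF).symm
    have hsplitG := Summable.sum_add_tsum_nat_add 9 hG
    have hGtail : Summable (fun k : ℕ => G (k + 9)) := (summable_nat_add_iff 9).mpr hG
    have hT : Summable T := summable_tail 10
    have h3 : ∑' k : ℕ, F (k + 9) ≤ (∑' k : ℕ, G (k + 9)) + ∑' k : ℕ, T k := by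
      refine le_trans (Summable.tsum_le_tsum htail ((summable_nat_add_iff 9).mpr hF) (hGtail.add hT)) ?_
      rw [Summable.tsum_add hGtail hT]
    have htsumT : ∑' k : ℕ, T k ≤ 0.03 := by
      apply tail_tsum_bound
      refine le_trans (by norm_num : Real.exp (-((10:ℝ)/2)) ≤ Real.exp (-(5:ℝ))) ?_
      refine le_trans (exp_neg_le_aux 5 (by norm_num)) ?_
      norm_num
    have hsqrt : Real.sqrt (π * α) ≤ 0.85 * α - 0.03 := by
      rw [Real.sqrt_le_iff]
      refine ⟨by nlinarith, ?_⟩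
      have hπ : π ≤ 3.15 := by linarith [Real.pi_lt_d2]
      nlinarith [mul_nonneg (by linarith : (0:ℝ) ≤ α - 4.6) (by linarith : (0:ℝ) ≤ α)]
    have hGle := gauss_sum_le α hα0
    calc ∑' i, F i
        = (∑ i ∈ Finset.range 9, F i) + ∑' k : ℕ, F (k + 9) := hsplitF
      _ ≤ (∑ i ∈ Finset.range 9, G i) + ((∑' k : ℕ, G (k + 9)) + ∑' k : ℕ, T k) := by
          exact add_le_add (Finset.sum_le_sum hhead) h3
      _ = (∑' n, G n) + ∑' k : ℕ, T k := by rw [← hsplitG]; ring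
      _ ≤ Real.sqrt (π * α) + 0.03 := add_le_add hGle htsumT
      _ ≤ 0.85 * α := by linarith
end

section
/- Let q_1,...,q_n ∈ [0, δ] with δ ∈ (0,1), and set s = -Σ ln(1 - q_i) and λ = Σ q_i. Then 0 ≤ (1 - e^{-s}) - (1 - e^{-λ}) ≤ δ · (1 - e^{-s}). -/
open Real

/-- For `q_i ∈ [0, δ]`, `δ ∈ (0,1)`, with `s = -Σ ln(1 - q_i)` and `λ = Σ q_i`:
`0 ≤ (1 - e^{-s}) - (1 - e^{-λ}) ≤ δ·(1 - e^{-s})`, i.e. the Poisson approximation of the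
single-item Bernoulli objective satisfies `0 ≤ H_ber - H_pois ≤ δ·H_ber`. -/
theorem single_item_poisson (n : ℕ) (q : Fin n → ℝ) (δ : ℝ) (hδ : δ ∈ Set.Ioo (0 : ℝ) 1)
    (hq : ∀ i, q i ∈ Set.Icc (0 : ℝ) δ)
    (s lam : ℝ) (hs : s = -∑ i, Real.log (1 - q i)) (hlam : lam = ∑ i, q i) :
    0 ≤ (1 - Real.exp (-s)) - (1 - Real.exp (-lam)) ∧
    (1 - Real.exp (-s)) - (1 - Real.exp (-lam)) ≤ δ * (1 - Real.exp (-s)) := by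
  obtain ⟨hδ0, hδ1⟩ := hδ
  have hpos : ∀ i, 0 < 1 - q i := fun i => by
    have := (hq i).2; linarith
  -- lam ≤ s
  have hls : lam ≤ s := by
    rw [hs, hlam, ← Finset.sum_neg_distrib]
    apply Finset.sum_le_sum
    intro i _
    have h := Real.log_le_sub_one_of_pos (hpos i)
    linarith
  -- (1-δ) * s ≤ lam
  have hsl : (1 - δ) * s ≤ lam := by
    rw [hs, hlam, ← Finset.sum_neg_distrib, Finset.mul_sum]
    apply Finset.sum_le_sum
    intro i _
    have h1 : 1 - 1 / (1 - q i) ≤ Real.log (1 - q i) := by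
      have := Real.log_le_sub_one_of_pos (inv_pos.2 (hpos i))
      rw [Real.log_inv] at this
      rw [one_div]
      linarith
    have h2 : -Real.log (1 - q i) ≤ q i / (1 - q i) := by
      have hne : (1 - q i) ≠ 0 := ne_of_gt (hpos i)
      have : 1 / (1 - q i) - 1 = q i / (1 - q i) := by
        field_simp
        ring
      linarith [h1]
    have h3 : q i / (1 - q i) ≤ q i / (1 - δ) := by
      apply div_le_div_of_nonneg_left (hq i).1 (by linarith) ?_
      linarith [(hq i).2]
    have h4 : (1 - δ) * -Real.log (1 - q i) ≤ (1 - δ) * (q i / (1 - δ)) :=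
      mul_le_mul_of_nonneg_left (le_trans h2 h3) (by linarith)
    have : (1 - δ) * (q i / (1 - δ)) = q i := by
      rw [mul_comm]; exact div_mul_cancel₀ _ (by linarith)
    linarith
  have h0s : 0 ≤ s := by
    rw [hs, ← Finset.sum_neg_distrib]
    apply Finset.sum_nonneg
    intro i _
    have h : Real.log (1 - q i) ≤ 0 :=
      Real.log_nonpos (le_of_lt (hpos i)) (by linarith [(hq i).1])
    linarith
  constructor
  · have := Real.exp_le_exp.2 (neg_le_neg hls)
    linarith
  · -- key: exp(-lam) ≤ δ + (1-δ) * exp(-s)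
    have hkey : Real.exp (-lam) ≤ δ + (1 - δ) * Real.exp (-s) := by
      have h1 : Real.exp (-lam) ≤ Real.exp (-((1 - δ) * s)) :=
        Real.exp_le_exp.2 (by linarith)
      have hx : (0:ℝ) < Real.exp (-s) := Real.exp_pos _
      have h2 : Real.exp (-((1 - δ) * s)) = (Real.exp (-s)) ^ (1 - δ) := by
        rw [← Real.exp_log hx, ← Real.exp_mul, Real.log_exp]
        ring_nf
      have h3 : (Real.exp (-s)) ^ (1 - δ) * (1:ℝ) ^ δ ≤
          (1 - δ) * Real.exp (-s) + δ * 1 :=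
        Real.geom_mean_le_arith_mean2_weighted (by linarith) (le_of_lt hδ0)
          (le_of_lt hx) zero_le_one (by ring)
      rw [Real.one_rpow, mul_one] at h3
      rw [mul_one] at h3
      linarith [h2 ▸ h1]
    nlinarith [Real.exp_pos (-s)]
end

section
/- Let z ~ Ber(q) and y ~ Pois(q) with q ∈ [0, 1] be coupled so that z = 0 implies y = 0 and the joint marginals are correct. Then E[|z - y|] ≤ 2.5·q². -/
set_option maxHeartbeats 1000000


open Real

/-- Auxiliary: `4 * (j+1) * 2^j ≤ 3 * (j+2)!`. -/
lemma coupling_aux_nat (j : ℕ) : 4 * (j + 1) * 2 ^ j ≤ 3 * Nat.factorial (j + 2) := by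
  induction j with
  | zero => decide
  | succ n ih =>
    rcases Nat.eq_zero_or_pos n with hn | hn
    · subst hn; decide
    · have h2 : (1 : ℕ) ≤ 2 ^ n := Nat.one_le_two_pow
      have hfact : Nat.factorial (n + 3) = (n + 3) * Nat.factorial (n + 2) :=
        Nat.factorial_succ (n + 2)
      calc 4 * (n + 1 + 1) * 2 ^ (n + 1)
          = 2 * (n + 2) * (4 * 2 ^ n) := by ring
        _ ≤ (n + 3) * (n + 1) * (4 * 2 ^ n) := by
            apply Nat.mul_le_mul_right
            nlinarith
        _ = (n + 3) * (4 * (n + 1) * 2 ^ n) := by ring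
        _ ≤ (n + 3) * (3 * Nat.factorial (n + 2)) := Nat.mul_le_mul_left _ ih
        _ = 3 * Nat.factorial (n + 3) := by rw [hfact]; ring

/-- Auxiliary real version: `(j+1) / (j+2)! ≤ (3/4) * (1/2)^j`. -/
lemma coupling_aux_real (j : ℕ) :
    ((j : ℝ) + 1) / (Nat.factorial (j + 2) : ℝ) ≤ 3 / 4 * (1 / 2) ^ j := by
  have h := coupling_aux_nat j
  have hcast : (4 * (j + 1) * 2 ^ j : ℝ) ≤ 3 * (Nat.factorial (j + 2) : ℝ) := by
    exact_mod_cast h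
  have hfpos : (0 : ℝ) < (Nat.factorial (j + 2) : ℝ) := by
    exact_mod_cast Nat.factorial_pos (j + 2)
  have h2pos : (0 : ℝ) < (2 : ℝ) ^ j := by positivity
  rw [div_le_iff₀ hfpos]
  have : (3 : ℝ) / 4 * (1 / 2) ^ j * (Nat.factorial (j + 2) : ℝ)
      = (3 * (Nat.factorial (j + 2) : ℝ)) / (4 * 2 ^ j) := by
    rw [one_div, inv_pow]
    field_simp
  rw [this, le_div_iff₀ (by positivity)]
  nlinarith [hcast, h2pos]

/-- Let `z ~ Ber(q)` and `y ~ Pois(q)` be coupled (joint law `p`) so that `z = 0` implies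
`y = 0` and the marginals are correct. Then `E[|z - y|] ≤ 2.5·q²`. -/
theorem coupling_expectation (q : ℝ) (hq : q ∈ Set.Icc (0 : ℝ) 1)
    (p : Bool → ℕ → ℝ)
    (hpos : ∀ b j, 0 ≤ p b j)
    (hsum : Summable fun bj : Bool × ℕ => p bj.1 bj.2)
    (hmargz0 : ∑' j : ℕ, p false j = 1 - q)
    (hmargz1 : ∑' j : ℕ, p true j = q)
    (hmargy : ∀ j : ℕ, p false j + p true j = Real.exp (-q) * q ^ j / (Nat.factorial j : ℝ))
    (hcouple : ∀ j : ℕ, j ≠ 0 → p false j = 0) :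
    ∑' bj : Bool × ℕ, p bj.1 bj.2 * |(if bj.1 then (1 : ℝ) else 0) - (bj.2 : ℝ)| ≤ 2.5 * q ^ 2 := by
  obtain ⟨hq0, hq1⟩ := hq
  have hq2 : (0 : ℝ) ≤ q ^ 2 := sq_nonneg q
  set f : Bool × ℕ → ℝ :=
    fun bj => p bj.1 bj.2 * |(if bj.1 then (1 : ℝ) else 0) - (bj.2 : ℝ)| with hf_def
  by_cases hf : Summable f
  · -- marginal facts
    have hp0 : p false 0 = 1 - q := by
      rw [← hmargz0, tsum_eq_single 0 (fun j hj => hcouple j hj)]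
    have hpt0 : p true 0 = Real.exp (-q) - (1 - q) := by
      have h := hmargy 0
      simp only [pow_zero, Nat.factorial_zero, Nat.cast_one, mul_one, div_one, hp0] at h
      linarith
    have hptj : ∀ j : ℕ, j ≠ 0 →
        p true j = Real.exp (-q) * q ^ j / (Nat.factorial j : ℝ) := by
      intro j hj
      have h := hmargy j
      rw [hcouple j hj] at h
      linarith
    -- the false part vanishes
    have hfalse_zero : ∀ j : ℕ, f (false, j) = 0 := by
      intro j
      rcases Nat.eq_zero_or_pos j with hj | hj
      · subst hj; simp [hf_def]
      · simp [hf_def, hcouple j (Nat.pos_iff_ne_zero.mp hj)]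
    -- split the tsum
    have hsplit : ∑' bj : Bool × ℕ, f bj = ∑' j : ℕ, f (true, j) := by
      rw [Summable.tsum_prod' hf (hf.prod_factor), tsum_bool]
      simp only [hfalse_zero, tsum_zero, zero_add]
    have hsumt : Summable fun j => f (true, j) := hf.prod_factor true
    have hsumt1 : Summable fun j => f (true, j + 1) := (summable_nat_add_iff 1).2 hsumt
    have hsumt2 : Summable fun j => f (true, j + 2) := (summable_nat_add_iff 2).2 hsumt
    have hsplit1 : ∑' j : ℕ, f (true, j) = f (true, 0) + ∑' j : ℕ, f (true, j + 1) :=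
      Summable.tsum_eq_zero_add hsumt
    have hsplit2 : ∑' j : ℕ, f (true, j + 1) = f (true, 1) + ∑' j : ℕ, f (true, j + 2) :=
      Summable.tsum_eq_zero_add hsumt1
    -- individual terms
    have hft0 : f (true, 0) = Real.exp (-q) - (1 - q) := by
      simp [hf_def, hpt0]
    have hft1 : f (true, 1) = 0 := by
      simp [hf_def]
    -- bound on the head term
    have hexp_lb : 1 - q ≤ Real.exp (-q) := by
      have := Real.add_one_le_exp (-q)
      linarith
    have hhead : Real.exp (-q) - (1 - q) ≤ 3 / 4 * q ^ 2 := by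
      have hb := Real.exp_bound (x := -q) (by rw [abs_neg, abs_of_nonneg hq0]; exact hq1)
        (n := 2) (by norm_num)
      have hsum2 : ∑ m ∈ Finset.range 2, (-q) ^ m / (Nat.factorial m : ℝ) = 1 - q := by
        norm_num [Finset.sum_range_succ]
        try ring
      rw [hsum2, abs_neg, abs_of_nonneg hq0,
        abs_of_nonneg (by linarith : (0 : ℝ) ≤ Real.exp (-q) - (1 - q))] at hb
      norm_num [Nat.factorial] at hb
      linarith
    -- bound on the tail terms
    have hexp_le_one : Real.exp (-q) ≤ 1 := Real.exp_le_one_iff.2 (by linarith)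
    have htail_term : ∀ j : ℕ, f (true, j + 2) ≤ q ^ 2 * (3 / 4) * (1 / 2) ^ j := by
      intro j
      have hval : f (true, j + 2) = p true (j + 2) * ((j : ℝ) + 1) := by
        have : |(1 : ℝ) - ((j : ℕ) + 2 : ℕ)| = (j : ℝ) + 1 := by
          rw [abs_of_nonpos (by push_cast; linarith [Nat.cast_nonneg (α := ℝ) j])]
          push_cast; ring
        simp only [hf_def, if_true]
        rw [this]
      rw [hval, hptj (j + 2) (by omega)]
      have hfpos : (0 : ℝ) < (Nat.factorial (j + 2) : ℝ) := by
        exact_mod_cast Nat.factorial_pos (j + 2)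
      have hqpow : q ^ (j + 2) ≤ q ^ 2 := by
        calc q ^ (j + 2) = q ^ j * q ^ 2 := by ring
          _ ≤ 1 * q ^ 2 := by
              apply mul_le_mul_of_nonneg_right _ hq2
              exact pow_le_one₀ hq0 hq1
          _ = q ^ 2 := one_mul _
      have h1 : Real.exp (-q) * q ^ (j + 2) / (Nat.factorial (j + 2) : ℝ) * ((j : ℝ) + 1)
          ≤ q ^ 2 * (((j : ℝ) + 1) / (Nat.factorial (j + 2) : ℝ)) := by
        rw [div_mul_eq_mul_div, mul_div_assoc]
        apply mul_le_mul _ le_rfl (by positivity) hq2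
        calc Real.exp (-q) * q ^ (j + 2) ≤ 1 * q ^ 2 := by
              apply mul_le_mul hexp_le_one hqpow (by positivity) (by norm_num)
          _ = q ^ 2 := one_mul _
      calc Real.exp (-q) * q ^ (j + 2) / (Nat.factorial (j + 2) : ℝ) * ((j : ℝ) + 1)
          ≤ q ^ 2 * (((j : ℝ) + 1) / (Nat.factorial (j + 2) : ℝ)) := h1
        _ ≤ q ^ 2 * (3 / 4 * (1 / 2) ^ j) :=
            mul_le_mul_of_nonneg_left (coupling_aux_real j) hq2
        _ = q ^ 2 * (3 / 4) * (1 / 2) ^ j := by ring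
    have hgeo : Summable fun j : ℕ => q ^ 2 * (3 / 4) * (1 / 2 : ℝ) ^ j :=
      (summable_geometric_of_lt_one (by norm_num) (by norm_num)).mul_left _
    have htail : ∑' j : ℕ, f (true, j + 2) ≤ 3 / 2 * q ^ 2 := by
      calc ∑' j : ℕ, f (true, j + 2) ≤ ∑' j : ℕ, q ^ 2 * (3 / 4) * (1 / 2 : ℝ) ^ j :=
            Summable.tsum_le_tsum htail_term hsumt2 hgeo
        _ = q ^ 2 * (3 / 4) * ∑' j : ℕ, (1 / 2 : ℝ) ^ j := tsum_mul_left
        _ = q ^ 2 * (3 / 4) * 2 := by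
            rw [tsum_geometric_of_lt_one (by norm_num) (by norm_num)]
            norm_num
        _ = 3 / 2 * q ^ 2 := by ring
    -- assemble
    have hmain : ∑' bj : Bool × ℕ, f bj ≤ 3 / 4 * q ^ 2 + 3 / 2 * q ^ 2 := by
      rw [hsplit, hsplit1, hsplit2, hft0, hft1]
      linarith
    calc ∑' bj : Bool × ℕ, f bj ≤ 3 / 4 * q ^ 2 + 3 / 2 * q ^ 2 := hmain
      _ ≤ 2.5 * q ^ 2 := by nlinarith
  · rw [tsum_eq_zero_of_not_summable hf]
    nlinarith
end

section
/- Given n finite-support distributions D_1,...,D_n, parameters ℓ* ≥ 0, δ ∈ (0,1), and ε ∈ [ℓ*/(δk), 1) a multiple of 1/k, there exist a threshold η ≥ 0 and a set S of size exactly εk such that: (a) for all 0 ≤ τ ≤ η, Σ_{i∈S} P[v_i ≥ τ] ≥ ℓ*; and (b) for all i ∉ S, P[v_i > η] < δ. -/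
open Finset

/-- Small Bidder Set: given `n` finite-support distributions (pmfs `p i` supported on the
common finite set `A ⊆ [0,∞)`), parameters `ℓ* ≥ 0`, `δ ∈ (0,1)`, and `ε = m/k ∈ [ℓ*/(δk), 1)`
a multiple of `1/k`, there exist a threshold `η ≥ 0` and a set `S` of size exactly `εk = m`
such that (a) for all `0 ≤ τ ≤ η`, `Σ_{i∈S} P[v_i ≥ τ] ≥ ℓ*`, and (b) for all `i ∉ S`,
`P[v_i > η] < δ`. -/
theorem small_bidder_set (n k : ℕ) (hk : 0 < k) (hkn : k ≤ n)
    (A : Finset ℝ) (hA : ∀ a ∈ A, 0 ≤ a)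
    (p : Fin n → ℝ → ℝ) (hp0 : ∀ i a, 0 ≤ p i a)
    (hsupp : ∀ i a, a ∉ A → p i a = 0)
    (hp1 : ∀ i, ∑ a ∈ A, p i a = 1)
    (ℓs : ℝ) (hℓs0 : 0 ≤ ℓs) (hℓsk : ℓs < k)
    (δ : ℝ) (hδ : δ ∈ Set.Ioo (0 : ℝ) 1)
    (m : ℕ) (hε1 : ℓs / (δ * k) ≤ (m : ℝ) / k) (hε2 : (m : ℝ) / k < 1) :
    ∃ η : ℝ, 0 ≤ η ∧ ∃ S : Finset (Fin n), S.card = m ∧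
      (∀ τ : ℝ, 0 ≤ τ → τ ≤ η →
        ℓs ≤ ∑ i ∈ S, ∑ a ∈ A.filter (fun a => τ ≤ a), p i a) ∧
      (∀ i, i ∉ S → ∑ a ∈ A.filter (fun a => η < a), p i a < δ) := by
  classical
  obtain ⟨hδ0, hδ1⟩ := hδ
  have hk' : (0:ℝ) < k := by exact_mod_cast hk
  -- m < k, hence m ≤ n
  have hmk : m < k := by
    by_contra h
    push_neg at h
    have h1 : (1:ℝ) ≤ (m : ℝ) / k := by
      rw [le_div_iff₀ hk']
      simpa using (Nat.cast_le.mpr h : (k:ℝ) ≤ (m:ℝ))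
    linarith
  have hmn : m ≤ n := le_trans hmk.le hkn
  -- ℓs ≤ δ * m
  have hℓδm : ℓs ≤ δ * m := by
    rw [div_le_div_iff₀ (mul_pos hδ0 hk') hk'] at hε1
    nlinarith
  -- monotonicity of tail sums
  have hsub : ∀ (i : Fin n) (s t : ℝ), s ≤ t →
      ∑ a ∈ A.filter (fun a => t ≤ a), p i a ≤ ∑ a ∈ A.filter (fun a => s ≤ a), p i a := by
    intro i s t hst
    refine Finset.sum_le_sum_of_subset_of_nonneg ?_ (fun a _ _ => hp0 i a)
    intro a ha
    rw [Finset.mem_filter] at ha ⊢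
    exact ⟨ha.1, le_trans hst ha.2⟩
  have hsub' : ∀ (i : Fin n) (t : ℝ),
      ∑ a ∈ A.filter (fun a => t < a), p i a ≤ ∑ a ∈ A.filter (fun a => t ≤ a), p i a := by
    intro i t
    refine Finset.sum_le_sum_of_subset_of_nonneg ?_ (fun a _ _ => hp0 i a)
    intro a ha
    rw [Finset.mem_filter] at ha ⊢
    exact ⟨ha.1, le_of_lt ha.2⟩
  -- the candidate thresholds
  set F : Finset ℝ := (insert 0 A).filter (fun t =>
    m ≤ (Finset.univ.filter
      (fun i : Fin n => δ ≤ ∑ a ∈ A.filter (fun a => t ≤ a), p i a)).card) with hF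
  have h0F : (0:ℝ) ∈ F := by
    rw [hF, Finset.mem_filter]
    refine ⟨Finset.mem_insert_self _ _, ?_⟩
    have heq : (Finset.univ.filter
        (fun i : Fin n => δ ≤ ∑ a ∈ A.filter (fun a => (0:ℝ) ≤ a), p i a)) = Finset.univ := by
      apply Finset.filter_true_of_mem
      intro i _
      rw [Finset.filter_true_of_mem hA, hp1]
      linarith
    rw [heq, Finset.card_univ, Fintype.card_fin]
    exact hmn
  have hFne : F.Nonempty := ⟨0, h0F⟩
  set η : ℝ := F.max' hFne with hη
  have hηF : η ∈ F := Finset.max'_mem _ _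
  have hη0 : 0 ≤ η := Finset.le_max' _ 0 h0F
  have hQη : m ≤ (Finset.univ.filter
      (fun i : Fin n => δ ≤ ∑ a ∈ A.filter (fun a => η ≤ a), p i a)).card := by
    rw [hF, Finset.mem_filter] at hηF
    exact hηF.2
  set C : Finset (Fin n) := Finset.univ.filter
    (fun i : Fin n => δ ≤ ∑ a ∈ A.filter (fun a => η ≤ a), p i a) with hC
  set D : Finset (Fin n) := Finset.univ.filter
    (fun i : Fin n => δ ≤ ∑ a ∈ A.filter (fun a => η < a), p i a) with hD
  have hDC : D ⊆ C := by
    intro i hi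
    rw [hD, Finset.mem_filter] at hi
    rw [hC, Finset.mem_filter]
    exact ⟨Finset.mem_univ _, le_trans hi.2 (hsub' i η)⟩
  have hDm : D.card ≤ m := by
    by_cases hne : (A.filter (fun a => η < a)).Nonempty
    · set b : ℝ := (A.filter (fun a => η < a)).min' hne with hb
      have hbmem : b ∈ A.filter (fun a => η < a) := Finset.min'_mem _ _
      rw [Finset.mem_filter] at hbmem
      have hηlt : η < b := hbmem.2
      have hfeq : A.filter (fun a => η < a) = A.filter (fun a => b ≤ a) := by
        apply Finset.filter_congr
        intro a haA
        constructor
        · intro h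
          exact Finset.min'_le _ a (Finset.mem_filter.mpr ⟨haA, h⟩)
        · intro h
          exact lt_of_lt_of_le hηlt h
      have hnotQ : ¬ (m ≤ (Finset.univ.filter
          (fun i : Fin n => δ ≤ ∑ a ∈ A.filter (fun a => b ≤ a), p i a)).card) := by
        intro hQb
        have hbF : b ∈ F := by
          rw [hF, Finset.mem_filter]
          exact ⟨Finset.mem_insert_of_mem hbmem.1, hQb⟩
        have := Finset.le_max' F b hbF
        rw [← hη] at this
        linarith
      push_neg at hnotQ
      have hDeq : D = Finset.univ.filter
          (fun i : Fin n => δ ≤ ∑ a ∈ A.filter (fun a => b ≤ a), p i a) := by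
        rw [hD, hfeq]
      rw [hDeq]
      exact le_of_lt hnotQ
    · have hDe : D = ∅ := by
        rw [Finset.not_nonempty_iff_eq_empty] at hne
        rw [hD, hne]
        rw [Finset.filter_false_of_mem]
        intro i _
        simp only [Finset.sum_empty]
        push_neg
        linarith
      rw [hDe]
      simp
  have hmC : m ≤ C.card := hQη
  obtain ⟨S, hDS, hSC, hScard⟩ :=
    Finset.exists_subsuperset_card_eq hDC hDm hmC
  refine ⟨η, hη0, S, hScard, ?_, ?_⟩
  · intro τ hτ0 hτη
    have hbd : ∀ i ∈ S, δ ≤ ∑ a ∈ A.filter (fun a => τ ≤ a), p i a := by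
      intro i hi
      have hiC := hSC hi
      rw [hC, Finset.mem_filter] at hiC
      exact le_trans hiC.2 (hsub i τ η hτη)
    calc ℓs ≤ δ * m := hℓδm
      _ = ∑ _i ∈ S, δ := by rw [Finset.sum_const, hScard, nsmul_eq_mul, mul_comm]
      _ ≤ _ := Finset.sum_le_sum hbd
  · intro i hiS
    by_contra h
    push_neg at h
    have hiD : i ∈ D := by
      rw [hD, Finset.mem_filter]
      exact ⟨Finset.mem_univ _, h⟩
    exact hiS (hDS hiD)
end
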